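/- Let t_n denote the number of independent dominating sets of the chain triangular cactus T_n, and let φ = (1+√5)/2. Then the sequence t_n / φⁿ converges as n → ∞ to φ³/√5; in particular t_n grows asymptotically like a constant multiple of ((1+√5)/2)ⁿ. -/

import Mathlib

/-- `S` is an independent dominating set of `G`: pairwise non-adjacent, and every
vertex outside `S` has a neighbour in `S`. -/
def IsIndepDomSet {V : Type*} (G : SimpleGraph V) (S : Finset V) : Prop :=
  (∀ v ∈ S, ∀ w ∈ S, ¬ G.Adj v w) ∧ ∀ v, v ∉ S → ∃ w ∈ S, G.Adj v w

/-- The chain triangular cactus `T n`: vertices `Sum.inl i` are `x i`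
(`0 ≤ i ≤ n`) and `Sum.inr k` is `y (k+1)` (`0 ≤ k ≤ n-1`); the `i`-th triangle
(`1 ≤ i ≤ n`) has vertices `x (i-1)`, `x i`, `y i`. -/
def triChain (n : ℕ) : SimpleGraph (Fin (n + 1) ⊕ Fin n) :=
  SimpleGraph.fromRel fun p q =>
    match p, q with
    | Sum.inl i, Sum.inl j => (i : ℕ) + 1 = (j : ℕ)
    | Sum.inl i, Sum.inr k => (i : ℕ) = (k : ℕ) ∨ (i : ℕ) = (k : ℕ) + 1
    | _, _ => False

/-- The number of independent dominating sets of the chain triangular cactus `T n`. -/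
noncomputable def numIDSTri (n : ℕ) : ℕ :=
  Nat.card {S : Finset (Fin (n + 1) ⊕ Fin n) // IsIndepDomSet (triChain n) S}

/-! ### Counting binary strings with no two consecutive `true`s -/

/-- No two consecutive `true`s. -/
def NoTT (m : ℕ) (v : Fin m → Bool) : Prop :=
  ∀ (i : ℕ) (h : i + 1 < m),
    ¬(v ⟨i, Nat.lt_of_succ_lt h⟩ = true ∧ v ⟨i + 1, h⟩ = true)

lemma nott_zero (v : Fin 0 → Bool) : NoTT 0 v := by
  intro i h; omega

lemma nott_one (v : Fin 1 → Bool) : NoTT 1 v := by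
  intro i h; omega

lemma congr_mk {m : ℕ} (w : Fin m → Bool) {a b : ℕ} (ha : a < m) (hb : b < m)
    (hab : a = b) : w ⟨a, ha⟩ = w ⟨b, hb⟩ := by subst hab; rfl

/-- The splitting equivalence for the Fibonacci recursion. -/
def nottEquiv (m : ℕ) :
    {v : Fin (m + 2) → Bool // NoTT (m + 2) v} ≃
      ({v : Fin (m + 1) → Bool // NoTT (m + 1) v} ⊕ {v : Fin m → Bool // NoTT m v}) where
  toFun := fun ⟨v, hv⟩ =>
    if h : v 0 = true then
      Sum.inr ⟨fun i => v ⟨(i : ℕ) + 2, by omega⟩, by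
        intro i hi hcon
        exact hv (i + 2) (by omega) hcon⟩
    else
      Sum.inl ⟨fun i => v ⟨(i : ℕ) + 1, by omega⟩, by
        intro i hi hcon
        exact hv (i + 1) (by omega) hcon⟩
  invFun := fun s =>
    match s with
    | Sum.inl ⟨w, hw⟩ =>
      ⟨fun i => if h : (i : ℕ) = 0 then false else w ⟨(i : ℕ) - 1, by omega⟩, by
        intro i hi ⟨h1, h2⟩
        simp only at h1 h2
        by_cases h0 : i = 0
        · subst h0; simp at h1
        · rw [dif_neg h0] at h1
          rw [dif_neg (by omega : ¬(i + 1 = 0))] at h2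
          exact hw (i - 1) (by omega)
            ⟨h1, ((congr_mk w (by omega) (by omega) (by omega)).trans h2)⟩⟩
    | Sum.inr ⟨u, hu⟩ =>
      ⟨fun i => if h0 : (i : ℕ) = 0 then true else
          if h : (i : ℕ) = 1 then false else u ⟨(i : ℕ) - 2, by omega⟩, by
        intro i hi ⟨h1, h2⟩
        simp only at h1 h2
        by_cases h0 : i = 0
        · rw [dif_neg (by omega : ¬(i + 1 = 0)), dif_pos (by omega : i + 1 = 1)] at h2
          exact Bool.false_ne_true h2
        · rw [dif_neg h0] at h1
          by_cases h1' : i = 1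
          · rw [dif_pos h1'] at h1; exact Bool.false_ne_true h1
          · rw [dif_neg h1'] at h1
            rw [dif_neg (by omega : ¬(i + 1 = 0)), dif_neg (by omega : ¬(i + 1 = 1))] at h2
            exact hu (i - 2) (by omega)
              ⟨h1, ((congr_mk u (by omega) (by omega) (by omega)).trans h2)⟩⟩
  left_inv := by
    rintro ⟨v, hv⟩
    by_cases h : v 0 = true
    · simp only [dif_pos h]
      ext i
      simp only
      by_cases h0 : (i : ℕ) = 0
      · rw [dif_pos h0, show i = 0 from Fin.ext h0, h]
      · rw [dif_neg h0]
        by_cases h1 : (i : ℕ) = 1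
        · rw [dif_pos h1]
          have hcon := hv 0 (by omega)
          have hv1 : v ⟨1, by omega⟩ ≠ true := fun ht => hcon ⟨h, ht⟩
          have hi1 : i = ⟨1, by omega⟩ := Fin.ext h1
          rw [hi1]
          exact ((Bool.not_eq_true _).mp hv1).symm
        · rw [dif_neg h1]
          exact congr_arg v (Fin.ext (by simp; omega))
    · simp only [dif_neg h]
      ext i
      simp only
      by_cases h0 : (i : ℕ) = 0
      · rw [dif_pos h0, show i = 0 from Fin.ext h0]
        exact ((Bool.not_eq_true _).mp h).symm
      · rw [dif_neg h0]
        exact congr_arg v (Fin.ext (by simp; omega))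
  right_inv := by
    rintro (⟨w, hw⟩ | ⟨u, hu⟩)
    · simp only
      rw [dif_neg (by simp)]
      congr 1
    · simp only
      rw [dif_pos (by simp)]
      congr 1

lemma card_nott : ∀ m, Nat.card {v : Fin m → Bool // NoTT m v} = Nat.fib (m + 2)
  | 0 => by
    rw [Nat.card_congr (Equiv.subtypeUnivEquiv nott_zero)]
    simp [Nat.card_eq_fintype_card]
  | 1 => by
    rw [Nat.card_congr (Equiv.subtypeUnivEquiv nott_one)]
    rw [Nat.card_eq_fintype_card]
    simp
    decide
  | (m + 2) => by
    have hfib : Nat.fib (m + 2 + 2) = Nat.fib (m + 2) + Nat.fib (m + 2 + 1) := Nat.fib_add_two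
    rw [Nat.card_congr (nottEquiv m), Nat.card_sum, card_nott (m + 1), card_nott m, hfib]
    exact Nat.add_comm _ _

/-! ### Adjacency in the chain triangular cactus -/

lemma triChain_adj_ll {n : ℕ} (i j : Fin (n + 1)) :
    (triChain n).Adj (Sum.inl i) (Sum.inl j) ↔ ((i : ℕ) + 1 = j ∨ (j : ℕ) + 1 = i) := by
  simp only [triChain, SimpleGraph.fromRel_adj, ne_eq, Sum.inl.injEq]
  constructor
  · rintro ⟨_, h | h⟩
    · exact Or.inl h
    · exact Or.inr h
  · rintro (h | h)
    · exact ⟨fun he => by subst he; omega, Or.inl h⟩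
    · exact ⟨fun he => by subst he; omega, Or.inr h⟩

lemma triChain_adj_lr {n : ℕ} (i : Fin (n + 1)) (k : Fin n) :
    (triChain n).Adj (Sum.inl i) (Sum.inr k) ↔ ((i : ℕ) = k ∨ (i : ℕ) = (k : ℕ) + 1) := by
  simp only [triChain, SimpleGraph.fromRel_adj, ne_eq]
  constructor
  · rintro ⟨_, h | h⟩
    · exact h
    · exact h.elim
  · intro h
    exact ⟨fun he => by simp at he, Or.inl h⟩

lemma triChain_adj_rl {n : ℕ} (i : Fin (n + 1)) (k : Fin n) :
    (triChain n).Adj (Sum.inr k) (Sum.inl i) ↔ ((i : ℕ) = k ∨ (i : ℕ) = (k : ℕ) + 1) := by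
  rw [SimpleGraph.adj_comm]; exact triChain_adj_lr i k

lemma triChain_adj_rr {n : ℕ} (k l : Fin n) :
    ¬ (triChain n).Adj (Sum.inr k) (Sum.inr l) := by
  simp only [triChain, SimpleGraph.fromRel_adj, ne_eq]
  rintro ⟨_, h | h⟩ <;> exact h

/-! ### The set encoded by a string -/

/-- The vertex subset of `T (m+1)` encoded by a binary string: `x i` is in iff `v i`,
and `y (k+1)` is in iff both `v k` and `v (k+1)` are false. -/
def toSet {m : ℕ} (v : Fin (m + 2) → Bool) : Finset (Fin (m + 2) ⊕ Fin (m + 1)) :=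
  Finset.univ.filter fun p =>
    Sum.elim (fun i => v i) (fun k => !v k.castSucc && !v k.succ) p = true

lemma mem_toSet_inl {m : ℕ} (v : Fin (m + 2) → Bool) (i : Fin (m + 2)) :
    Sum.inl i ∈ toSet v ↔ v i = true := by
  simp [toSet]

lemma mem_toSet_inr {m : ℕ} (v : Fin (m + 2) → Bool) (k : Fin (m + 1)) :
    Sum.inr k ∈ toSet v ↔ v k.castSucc = false ∧ v k.succ = false := by
  simp [toSet]

/-- Independent dominating sets of `T (m+1)` correspond to binary strings of
length `m+2` with no two consecutive `true`s. -/
def idsEquiv (m : ℕ) :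
    {S : Finset (Fin (m + 2) ⊕ Fin (m + 1)) // IsIndepDomSet (triChain (m + 1)) S} ≃
      {v : Fin (m + 2) → Bool // NoTT (m + 2) v} where
  toFun := fun ⟨S, hS⟩ =>
    ⟨fun i => decide (Sum.inl i ∈ S), by
      intro i h hcon
      obtain ⟨h1, h2⟩ := hcon
      rw [decide_eq_true_eq] at h1 h2
      exact hS.1 _ h1 _ h2 ((triChain_adj_ll _ _).mpr (Or.inl rfl))⟩
  invFun := fun ⟨v, hv⟩ =>
    ⟨toSet v, by
      constructor
      · rintro (i | k) ha (j | l) hb hadj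
        · rw [mem_toSet_inl] at ha hb
          rcases (triChain_adj_ll i j).mp hadj with h | h
          · exact hv i (by omega) ⟨ha, (congr_mk v (by omega) (by omega) h).trans hb⟩
          · exact hv j (by omega) ⟨hb, (congr_mk v (by omega) (by omega) h).trans ha⟩
        · rw [mem_toSet_inl] at ha; rw [mem_toSet_inr] at hb
          rcases (triChain_adj_lr i l).mp hadj with h | h
          · have hil : i = l.castSucc := Fin.ext (by simpa using h)
            rw [hil, hb.1] at ha; exact Bool.false_ne_true ha
          · have hil : i = l.succ := Fin.ext (by simpa using h)
            rw [hil, hb.2] at ha; exact Bool.false_ne_true ha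
        · rw [mem_toSet_inr] at ha; rw [mem_toSet_inl] at hb
          rcases (triChain_adj_rl j k).mp hadj with h | h
          · have hjk : j = k.castSucc := Fin.ext (by simpa using h)
            rw [hjk, ha.1] at hb; exact Bool.false_ne_true hb
          · have hjk : j = k.succ := Fin.ext (by simpa using h)
            rw [hjk, ha.2] at hb; exact Bool.false_ne_true hb
        · exact triChain_adj_rr k l hadj
      · rintro (i | k) hp
        · rw [mem_toSet_inl, Bool.not_eq_true] at hp
          by_cases hi : (i : ℕ) < m + 1
          · have hks : (Fin.mk (i : ℕ) hi : Fin (m + 1)).castSucc = i := Fin.ext rfl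
            by_cases hs : v (Fin.mk (i : ℕ) hi : Fin (m + 1)).succ = true
            · exact ⟨Sum.inl (Fin.mk (i : ℕ) hi).succ, (mem_toSet_inl _ _).mpr hs,
                (triChain_adj_ll _ _).mpr (Or.inl rfl)⟩
            · refine ⟨Sum.inr (Fin.mk (i : ℕ) hi), (mem_toSet_inr _ _).mpr
                ⟨?_, (Bool.not_eq_true _).mp hs⟩, (triChain_adj_lr _ _).mpr (Or.inl rfl)⟩
              rw [hks]; exact hp
          · have hieq : (i : ℕ) = m + 1 := by omega
            have hkm : ((Fin.mk m (by omega) : Fin (m + 1)).succ : Fin (m + 2)) = i :=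
              Fin.ext (by simp [hieq.symm])
            by_cases hc : v (Fin.mk m (by omega) : Fin (m + 1)).castSucc = true
            · refine ⟨Sum.inl (Fin.mk m (by omega) : Fin (m + 1)).castSucc,
                (mem_toSet_inl _ _).mpr hc, (triChain_adj_ll _ _).mpr (Or.inr ?_)⟩
              simpa using hieq.symm
            · refine ⟨Sum.inr (Fin.mk m (by omega)), (mem_toSet_inr _ _).mpr
                ⟨(Bool.not_eq_true _).mp hc, ?_⟩, (triChain_adj_lr _ _).mpr (Or.inr hieq)⟩
              rw [hkm]; exact hp
        · rw [mem_toSet_inr] at hp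
          by_cases hc : v k.castSucc = true
          · exact ⟨Sum.inl k.castSucc, (mem_toSet_inl _ _).mpr hc,
              (triChain_adj_rl _ _).mpr (Or.inl (by simp))⟩
          · have hs : v k.succ = true := by
              by_cases hs : v k.succ = true
              · exact hs
              · exact absurd ⟨(Bool.not_eq_true _).mp hc, (Bool.not_eq_true _).mp hs⟩ hp
            exact ⟨Sum.inl k.succ, (mem_toSet_inl _ _).mpr hs,
              (triChain_adj_rl _ _).mpr (Or.inr (by simp))⟩⟩
  left_inv := by
    rintro ⟨S, hS⟩
    apply Subtype.ext
    simp only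
    ext p
    rcases p with i | k
    · rw [mem_toSet_inl, decide_eq_true_eq]
    · rw [mem_toSet_inr, decide_eq_false_iff_not, decide_eq_false_iff_not]
      constructor
      · rintro ⟨hc, hs⟩
        by_contra hk
        obtain ⟨w, hw, hadj⟩ := hS.2 _ hk
        rcases w with j | l
        · rcases (triChain_adj_rl j k).mp hadj with h | h
          · exact hc (by rwa [show k.castSucc = j from Fin.ext (by simpa using h.symm)])
          · exact hs (by rwa [show k.succ = j from Fin.ext (by simpa using h.symm)])
        · exact triChain_adj_rr k l hadj
      · intro hk
        constructor
        · intro hc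
          exact hS.1 _ hc _ hk ((triChain_adj_lr _ _).mpr (Or.inl (by simp)))
        · intro hs
          exact hS.1 _ hs _ hk ((triChain_adj_lr _ _).mpr (Or.inr (by simp)))
  right_inv := by
    rintro ⟨v, hv⟩
    apply Subtype.ext
    funext i
    simp only
    rcases hvi : v i with _ | _
    · simp [mem_toSet_inl, hvi]
    · simp [mem_toSet_inl, hvi]

lemma numIDSTri_eq (m : ℕ) : numIDSTri (m + 1) = Nat.fib (m + 4) := by
  unfold numIDSTri
  rw [Nat.card_congr (idsEquiv m), card_nott]

/-- With `φ = (1+√5)/2`, the sequence `t n / φ ^ n` converges to `φ³/√5`, where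
`t n` is the number of independent dominating sets of `T n`. -/
theorem numIDSTri_asymptotics :
    Filter.Tendsto
      (fun n : ℕ => (numIDSTri n : ℝ) / ((1 + Real.sqrt 5) / 2) ^ n)
      Filter.atTop
      (nhds (((1 + Real.sqrt 5) / 2) ^ 3 / Real.sqrt 5)) := by
  show Filter.Tendsto (fun n : ℕ => (numIDSTri n : ℝ) / Real.goldenRatio ^ n)
      Filter.atTop (nhds (Real.goldenRatio ^ 3 / Real.sqrt 5))
  have hφpos : (0 : ℝ) < Real.goldenRatio := zero_lt_one.trans Real.one_lt_goldenRatio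
  have h5 : Real.sqrt 5 ≠ 0 := ne_of_gt (Real.sqrt_pos.mpr (by norm_num))
  have habs : |Real.goldenConj / Real.goldenRatio| < 1 := by
    rw [abs_div, abs_of_pos hφpos, div_lt_one hφpos]
    have h1 : |Real.goldenConj| < 1 :=
      abs_lt.mpr ⟨Real.neg_one_lt_goldenConj, Real.goldenConj_neg.trans zero_lt_one⟩
    exact h1.trans Real.one_lt_goldenRatio
  have h0 : Filter.Tendsto (fun n : ℕ => (Real.goldenConj / Real.goldenRatio) ^ n)
      Filter.atTop (nhds 0) := tendsto_pow_atTop_nhds_zero_of_abs_lt_one habs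
  have h1 : Filter.Tendsto
      (fun n : ℕ => Real.goldenRatio ^ 3 / Real.sqrt 5 -
        Real.goldenConj ^ 3 / Real.sqrt 5 * (Real.goldenConj / Real.goldenRatio) ^ n)
      Filter.atTop (nhds (Real.goldenRatio ^ 3 / Real.sqrt 5 -
        Real.goldenConj ^ 3 / Real.sqrt 5 * 0)) :=
    Filter.Tendsto.sub tendsto_const_nhds (Filter.Tendsto.mul tendsto_const_nhds h0)
  rw [mul_zero, sub_zero] at h1
  apply h1.congr'
  filter_upwards [Filter.eventually_ge_atTop 1] with n hn
  obtain ⟨m, rfl⟩ : ∃ m, n = m + 1 := ⟨n - 1, by omega⟩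
  rw [numIDSTri_eq m, Real.coe_fib_eq]
  have hφne : Real.goldenRatio ^ (m + 1) ≠ (0 : ℝ) := pow_ne_zero _ Real.goldenRatio_ne_zero
  generalize Real.goldenRatio = a at hφne ⊢
  generalize Real.goldenConj = b
  have ha : a ≠ 0 := fun h => hφne (by rw [h]; simp)
  rw [div_pow]
  field_simp
  ring
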